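/- Let c be an admissible coefficient function satisfying (Cubic values), (Separation) and (Symmetry), and assume a_1 ≥ 2. Let γ ∈ ℤ^{μ_A−2} be non-negative with |γ| = 3, of the form γ = γ_{1,1}e_{1,1}+γ_{2,1}e_{2,1}+γ_{3,1}e_{3,1} with γ_{1,1}·γ_{2,1}·γ_{3,1} = 0. Then c(γ,1) = 0. -/

import Mathlib

/- Common framework: Frobenius manifolds for orbifold projective lines ℙ¹_A,
   following Ishibashi–Shiraishi–Takahashi. -/

namespace FrobeniusUniqueness

/-- A point index `(i, j)` labelling a flat coordinate `t_{i,j}`. -/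
abbrev Pt : Type := Fin 3 × ℕ

/-- A non-negative element of `ℤ^{μ_A − 2}`: an exponent vector `α` with `α_{i,j} ∈ ℕ`. -/
abbrev Expv : Type := Pt →₀ ℕ

/-- The standard basis vector `e_{i,j}`. -/
noncomputable def e (i : Fin 3) (j : ℕ) : Expv := Finsupp.single (i, j) 1

/-- The length `|α|` of an exponent vector. -/
def len (α : Expv) : ℕ := α.sum fun _ n => n

/-- A point index `(i,j)` is valid if `1 ≤ j ≤ a_i − 1`. -/
def ValidPt (A : Fin 3 → ℕ) (p : Pt) : Prop := 1 ≤ p.2 ∧ p.2 ≤ A p.1 - 1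

/-- An exponent vector lies in `ℤ^{μ_A − 2}` iff it is supported on valid indices. -/
def Valid (A : Fin 3 → ℕ) (α : Expv) : Prop := ∀ p ∈ α.support, ValidPt A p

/-- The combinatorial factor `s_{a,b,c}`. -/
def sFactor (a b c : ℕ) : ℂ :=
  if a = b ∧ b = c then 6
  else if a ≠ b ∧ b ≠ c ∧ a ≠ c then 1
  else 2

/-- The index type for the flat coordinates `t_1`, `t_{i,j}`, `t_{μ_A}`. -/
inductive Idx : Type where
  | one : Idx
  | pt : Fin 3 → ℕ → Idx
  | mu : Idx
deriving DecidableEq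

/-- Validity of a flat coordinate index. -/
def ValidIdx (A : Fin 3 → ℕ) : Idx → Prop
  | .one => True
  | .pt i j => ValidPt A (i, j)
  | .mu => True

/-- The metric `η` in the frame `∂_1, ∂_{i,j}, ∂_{μ_A}`. -/
noncomputable def eta (A : Fin 3 → ℕ) : Idx → Idx → ℂ
  | .one, .mu => 1
  | .mu, .one => 1
  | .pt i j, .pt i' j' =>
      if i = i' ∧ j + j' = A i ∧ 1 ≤ j ∧ j ≤ A i - 1 then (A i : ℂ)⁻¹ else 0
  | _, _ => 0

/-- The point indices occurring in an `Idx`. -/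
def ptsOf : Idx → List Pt
  | .pt i j => [(i, j)]
  | _ => []

/-- The number of occurrences of `μ_A` in an `Idx`. -/
def muCount : Idx → ℕ
  | .mu => 1
  | _ => 0

/-- The factor produced when the monomial `t^{β + Σ_{p ∈ ps} e_p}` is differentiated by
`∏_{p ∈ ps} ∂_p`, leaving the monomial `t^β`. -/
noncomputable def dfac (β : Expv) : List Pt → ℕ
  | [] => 1
  | p :: ps =>
      ((β + ((ps.map fun q => (Finsupp.single q 1 : Expv)).sum) + Finsupp.single p 1 : Expv) p)
        * dfac β ps

/-- `der A c a b d β m` is the coefficient of `t^β · e^{m·t_{μ_A}}` in `∂_a ∂_b ∂_d F`, where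
`F = (1/2)t_1²t_{μ_A} + (1/2)t_1·Σ_{i,j}(1/a_i)t_{i,j}t_{i,a_i−j} + Σ_{α,m} c(α,m)t^α e^{m t_{μ_A}}`
is the potential of the coefficient function `c`.  In particular `∂_1∂_a∂_b F = η(∂_a,∂_b)`. -/
noncomputable def der (A : Fin 3 → ℕ) (c : Expv → ℕ → ℂ) (a b d : Idx) (β : Expv) (m : ℕ) : ℂ :=
  if a = .one then (if β = 0 ∧ m = 0 then eta A b d else 0)
  else if b = .one then (if β = 0 ∧ m = 0 then eta A a d else 0)
  else if d = .one then (if β = 0 ∧ m = 0 then eta A a b else 0)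
  else
    (m : ℂ) ^ (muCount a + muCount b + muCount d) *
      (dfac β (ptsOf a ++ ptsOf b ++ ptsOf d) : ℂ) *
      c (β + (((ptsOf a ++ ptsOf b ++ ptsOf d).map fun q => (Finsupp.single q 1 : Expv)).sum)) m

/-- The coefficient of `t^β · e^{m·t_{μ_A}}` in
`Σ_{σ,τ} ∂_a∂_b∂_σF · η^{στ} · ∂_τ∂_d∂_e F`, where `(η^{στ})` is the inverse matrix of
`(η_{στ})` (so the only nonzero entries are `η^{1,μ_A} = η^{μ_A,1} = 1` and
`η^{(i,j),(i,a_i−j)} = a_i`). -/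
noncomputable def quadTerm (A : Fin 3 → ℕ) (c : Expv → ℕ → ℂ) (a b d e' : Idx)
    (β : Expv) (m : ℕ) : ℂ :=
  ∑ x ∈ Finset.HasAntidiagonal.antidiagonal β, ∑ y ∈ Finset.HasAntidiagonal.antidiagonal m,
    (der A c a b .one x.1 y.1 * der A c .mu d e' x.2 y.2
     + der A c a b .mu x.1 y.1 * der A c .one d e' x.2 y.2
     + ∑ i : Fin 3, ∑ j ∈ Finset.Icc 1 (A i - 1),
         (A i : ℂ) * der A c a b (.pt i j) x.1 y.1 * der A c (.pt i (A i - j)) d e' x.2 y.2)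

/-- `χ_A = 1/a_1 + 1/a_2 + 1/a_3 − 1`. -/
noncomputable def chi (A : Fin 3 → ℕ) : ℚ := (A 0 : ℚ)⁻¹ + (A 1 : ℚ)⁻¹ + (A 2 : ℚ)⁻¹ - 1

/-- The degree of the monomial `t^α`: `Σ_{i,j} α_{i,j}·(a_i − j)/a_i`. -/
noncomputable def deg (A : Fin 3 → ℕ) (α : Expv) : ℚ :=
  α.sum fun p n => (n : ℚ) * (((A p.1 : ℚ) - (p.2 : ℚ)) / (A p.1 : ℚ))

/-- A coefficient function is admissible if it satisfies (Homogeneity) and the WDVV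
equations (coefficientwise, in the variables `t_{i,j}` and `e^{t_{μ_A}}`). -/
structure IsAdmissible (A : Fin 3 → ℕ) (c : Expv → ℕ → ℂ) : Prop where
  homog : ∀ α : Expv, Valid A α → ∀ m : ℕ, c α m ≠ 0 → deg A α + (m : ℚ) * chi A = 2
  wdvv : ∀ a b d e' : Idx, ValidIdx A a → ValidIdx A b → ValidIdx A d → ValidIdx A e' →
      ∀ β : Expv, Valid A β → ∀ m : ℕ,
        quadTerm A c a b d e' β m = quadTerm A c a d b e' β m

/-- (Cubic values). -/
def CubicValues (A : Fin 3 → ℕ) (c : Expv → ℕ → ℂ) : Prop :=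
  (∀ (i₁ i₂ i₃ : Fin 3) (j₁ j₂ j₃ : ℕ),
      ValidPt A (i₁, j₁) → ValidPt A (i₂, j₂) → ValidPt A (i₃, j₃) →
      ¬(i₁ = i₂ ∧ i₂ = i₃) → c (e i₁ j₁ + e i₂ j₂ + e i₃ j₃) 0 = 0) ∧
  (∀ (i : Fin 3) (j₁ j₂ j₃ : ℕ),
      ValidPt A (i, j₁) → ValidPt A (i, j₂) → ValidPt A (i, j₃) →
      sFactor j₁ j₂ j₃ * c (e i j₁ + e i j₂ + e i j₃) 0 =
        if j₁ + j₂ + j₃ = A i then (A i : ℂ)⁻¹ else 0)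

/-- (Normalization). -/
def Normalization (A : Fin 3 → ℕ) (c : Expv → ℕ → ℂ) : Prop :=
  (2 ≤ A 0 → c (e 0 1 + e 1 1 + e 2 1) 1 = 1) ∧
  (A 0 = 1 → A 0 < A 1 → c (e 1 1 + e 2 1) 1 = 1) ∧
  (A 0 = 1 → A 1 = 1 → A 1 < A 2 → c (e 2 1) 1 = 1) ∧
  (A 0 = 1 → A 1 = 1 → A 2 = 1 → c 0 1 = 1)

/-- (Separation). -/
def Separation (A : Fin 3 → ℕ) (c : Expv → ℕ → ℂ) : Prop :=
  ∀ γ : Expv, Valid A γ →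
    ∀ (i₁ i₂ : Fin 3) (j₁ j₂ : ℕ), i₁ ≠ i₂ → ValidPt A (i₁, j₁) → ValidPt A (i₂, j₂) →
      e i₁ j₁ + e i₂ j₂ ≤ γ → c γ 0 = 0

/-- The automorphism of `ℤ^{μ_A−2}` exchanging `e_{i₁,j}` and `e_{i₂,j}` for all `j`. -/
def swapExp (i₁ i₂ : Fin 3) (α : Expv) : Expv :=
  Finsupp.equivMapDomain ((Equiv.swap i₁ i₂).prodCongr (Equiv.refl ℕ)) α

/-- (Symmetry). -/
def Symmetry (A : Fin 3 → ℕ) (c : Expv → ℕ → ℂ) : Prop :=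
  ∀ i₁ i₂ : Fin 3, A i₁ = A i₂ → ∀ α : Expv, Valid A α → ∀ m : ℕ,
    c (swapExp i₁ i₂ α) m = c α m


section Aux

variable {A : Fin 3 → ℕ} {c : Expv → ℕ → ℂ}

lemma len_add (α β : Expv) : len (α + β) = len α + len β :=
  Finsupp.sum_add_index' (fun _ => rfl) (fun _ _ _ => rfl)

lemma len_single (p : Pt) (n : ℕ) : len (Finsupp.single p n) = n :=
  Finsupp.sum_single_index rfl

lemma len_eq_zero {α : Expv} (h : len α = 0) : α = 0 := by
  ext p
  rw [Finsupp.coe_zero, Pi.zero_apply]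
  by_cases hp : p ∈ α.support
  · have h1 : α p ≤ len α :=
      Finset.single_le_sum (f := fun q => α q) (fun _ _ => Nat.zero_le _) hp
    omega
  · simpa using Finsupp.notMem_support_iff.mp hp

lemma valid_of_le {α β : Expv} (h : α ≤ β) (hβ : Valid A β) : Valid A α := by
  intro p hp
  apply hβ
  rw [Finsupp.mem_support_iff] at hp ⊢
  intro h0
  exact hp (Nat.le_zero.mp (h0 ▸ h p))

lemma valid_add {α β : Expv} (hα : Valid A α) (hβ : Valid A β) : Valid A (α + β) := by
  intro p hp
  rcases Finset.mem_union.mp (Finsupp.support_add hp) with h | h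
  exacts [hα p h, hβ p h]

lemma valid_single {p : Pt} (hp : ValidPt A p) (n : ℕ) : Valid A (Finsupp.single p n) := by
  intro q hq
  have h := Finsupp.support_single_subset hq
  rw [Finset.mem_singleton] at h
  rwa [h]

lemma validPt_mk {A : Fin 3 → ℕ} (i : Fin 3) (j : ℕ) (h1 : 1 ≤ j) (h2 : j ≤ A i - 1) :
    ValidPt A (i, j) := ⟨h1, h2⟩

lemma sFactor_ne_zero (a b d : ℕ) : sFactor a b d ≠ 0 := by
  unfold sFactor; split_ifs <;> norm_num

lemma c_cubic_offsum (hcub : CubicValues A c) {i : Fin 3} {j₁ j₂ j₃ : ℕ}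
    (h1 : ValidPt A (i, j₁)) (h2 : ValidPt A (i, j₂)) (h3 : ValidPt A (i, j₃))
    (hs : j₁ + j₂ + j₃ ≠ A i) : c (e i j₁ + e i j₂ + e i j₃) 0 = 0 := by
  have h := hcub.2 i j₁ j₂ j₃ h1 h2 h3
  rw [if_neg hs] at h
  exact (mul_eq_zero.mp h).resolve_left (sFactor_ne_zero _ _ _)

lemma A_le_A2 (hA01 : A 0 ≤ A 1) (hA12 : A 1 ≤ A 2) (i : Fin 3) : A i ≤ A 2 := by
  fin_cases i
  · exact le_trans hA01 hA12
  · exact hA12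
  · exact le_rfl

lemma two_le_A (hA01 : A 0 ≤ A 1) (hA12 : A 1 ≤ A 2) (ha₁ : 2 ≤ A 0) (i : Fin 3) :
    2 ≤ A i := by
  fin_cases i
  · exact ha₁
  · exact le_trans ha₁ hA01
  · exact le_trans ha₁ (le_trans hA01 hA12)

/-- Any valid exponent vector of length at most 2 has vanishing coefficient at `m = 1`. -/
lemma c_len_le_two (hA01 : A 0 ≤ A 1) (hA12 : A 1 ≤ A 2) (ha₁ : 2 ≤ A 0)
    (hadm : IsAdmissible A c) {α : Expv} (hα : Valid A α) (hlen : len α ≤ 2) :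
    c α 1 = 0 := by
  by_contra hc
  have h := hadm.homog α hα 1 hc
  have hA0 : (2:ℚ) ≤ (A 0 : ℚ) := by exact_mod_cast ha₁
  have hA1 : (2:ℚ) ≤ (A 1 : ℚ) := by exact_mod_cast le_trans ha₁ hA01
  have hA2 : (2:ℚ) ≤ (A 2 : ℚ) := by exact_mod_cast le_trans ha₁ (le_trans hA01 hA12)
  have hA2pos : (0:ℚ) < (A 2 : ℚ) := by linarith
  have hA2inv : (0:ℚ) < (A 2 : ℚ)⁻¹ := inv_pos.mpr hA2pos
  have hA2inv2 : (A 2 : ℚ)⁻¹ * (A 2 : ℚ) = 1 := inv_mul_cancel₀ (ne_of_gt hA2pos)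
  have hdeg : deg A α ≤ (len α : ℚ) * (1 - (A 2 : ℚ)⁻¹) := by
    unfold deg len
    rw [Finsupp.sum, Finsupp.sum, Nat.cast_sum, Finset.sum_mul]
    apply Finset.sum_le_sum
    intro p hp
    obtain ⟨hj1, hj2⟩ := hα p hp
    have hle : (A p.1 : ℚ) ≤ (A 2 : ℚ) := by
      exact_mod_cast A_le_A2 hA01 hA12 p.1
    have hge : (2:ℚ) ≤ (A p.1 : ℚ) := by
      exact_mod_cast two_le_A hA01 hA12 ha₁ p.1
    have hapos : (0:ℚ) < (A p.1 : ℚ) := by linarith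
    have hj1q : (1:ℚ) ≤ (p.2 : ℚ) := by exact_mod_cast hj1
    apply mul_le_mul_of_nonneg_left _ (Nat.cast_nonneg (α p))
    rw [div_le_iff₀ hapos]
    nlinarith [mul_le_mul_of_nonneg_left hle (le_of_lt hA2inv)]
  have hlenq : (len α : ℚ) ≤ 2 := by exact_mod_cast hlen
  have hi0 : (A 0:ℚ)⁻¹ ≤ 1/2 := by
    rw [show ((A 0:ℚ))⁻¹ = 1 / (A 0:ℚ) from (one_div _).symm,
      div_le_div_iff₀ (by linarith) (by norm_num)]
    linarith
  have hi1 : (A 1:ℚ)⁻¹ ≤ 1/2 := by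
    rw [show ((A 1:ℚ))⁻¹ = 1 / (A 1:ℚ) from (one_div _).symm,
      div_le_div_iff₀ (by linarith) (by norm_num)]
    linarith
  have hi2 : (A 2:ℚ)⁻¹ ≤ 1/2 := by
    rw [show ((A 2:ℚ))⁻¹ = 1 / (A 2:ℚ) from (one_div _).symm,
      div_le_div_iff₀ (by linarith) (by norm_num)]
    linarith
  have hprod : (len α : ℚ) * (1 - (A 2:ℚ)⁻¹) ≤ 2 * (1 - (A 2:ℚ)⁻¹) := by
    apply mul_le_mul_of_nonneg_right hlenq
    linarith
  unfold chi at h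
  rw [Nat.cast_one, one_mul] at h
  linarith

end Aux
/-- Key WDVV computation: if `γ` is valid of length 3, supported on indices `(·,1)`,
and misses leg `w`, then `c γ 1 = 0`. -/
lemma key_vanish (A : Fin 3 → ℕ) (hA01 : A 0 ≤ A 1) (hA12 : A 1 ≤ A 2)
    (c : Expv → ℕ → ℂ) (hadm : IsAdmissible A c) (hcub : CubicValues A c)
    (hsep : Separation A c) (ha₁ : 2 ≤ A 0)
    (γ : Expv) (hval : Valid A γ) (hlen : len γ = 3)
    (hsupp : ∀ p ∈ γ.support, p.2 = 1) (w : Fin 3) (hw : γ (w, 1) = 0) :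
    c γ 1 = 0 := by
  have hA2all : ∀ i : Fin 3, 2 ≤ A i := two_le_A hA01 hA12 ha₁
  have hw2 : 2 ≤ A w := hA2all w
  have hvp1 : ValidPt A (w, 1) := validPt_mk w 1 le_rfl (by omega)
  have hvp2 : ValidPt A (w, A w - 1) := validPt_mk w (A w - 1) (by omega) le_rfl
  have hwdvv := hadm.wdvv (.pt w 1) (.pt w (A w - 1)) .mu .mu hvp1 hvp2 trivial trivial γ hval 1
  -- the right-hand side of WDVV vanishes
  have hR : quadTerm A c (.pt w 1) .mu (.pt w (A w - 1)) .mu γ 1 = 0 := by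
    unfold quadTerm
    apply Finset.sum_eq_zero; intro x hx
    apply Finset.sum_eq_zero; intro y hy
    rw [Finset.HasAntidiagonal.mem_antidiagonal] at hy
    have h1 : der A c (Idx.pt w 1) Idx.mu Idx.one x.1 y.1 = 0 := by
      simp [der, show eta A (Idx.pt w 1) Idx.mu = 0 from rfl]
    have h2 : der A c Idx.one (Idx.pt w (A w - 1)) Idx.mu x.2 y.2 = 0 := by
      simp [der, show eta A (Idx.pt w (A w - 1)) Idx.mu = 0 from rfl]
    rw [h1, h2, zero_mul, mul_zero, add_zero, zero_add]
    apply Finset.sum_eq_zero; intro i _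
    apply Finset.sum_eq_zero; intro j _
    rcases (by omega : y.1 = 0 ∨ y.2 = 0) with h | h
    · have : der A c (Idx.pt w 1) Idx.mu (Idx.pt i j) x.1 y.1 = 0 := by
        simp [der, muCount, h]
      rw [this, mul_zero, zero_mul]
    · have : der A c (Idx.pt i (A i - j)) (Idx.pt w (A w - 1)) Idx.mu x.2 y.2 = 0 := by
        simp [der, muCount, h]
      rw [this, mul_zero]
  -- the left-hand side of WDVV
  have hL : quadTerm A c (.pt w 1) (.pt w (A w - 1)) .mu .mu γ 1 = (A w : ℂ)⁻¹ * c γ 1 := by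
    unfold quadTerm
    have step : ∀ x ∈ Finset.HasAntidiagonal.antidiagonal γ, ∀ y ∈ Finset.HasAntidiagonal.antidiagonal (1:ℕ),
        der A c (Idx.pt w 1) (Idx.pt w (A w - 1)) Idx.one x.1 y.1 *
            der A c Idx.mu Idx.mu Idx.mu x.2 y.2
          + der A c (Idx.pt w 1) (Idx.pt w (A w - 1)) Idx.mu x.1 y.1 *
              der A c Idx.one Idx.mu Idx.mu x.2 y.2
          + ∑ i : Fin 3, ∑ j ∈ Finset.Icc 1 (A i - 1),
              (A i : ℂ) * der A c (Idx.pt w 1) (Idx.pt w (A w - 1)) (Idx.pt i j) x.1 y.1 *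
                der A c (Idx.pt i (A i - j)) Idx.mu Idx.mu x.2 y.2
        = if x.1 = 0 ∧ y.1 = 0 then (A w : ℂ)⁻¹ * c γ 1 else 0 := by
      intro x hx y hy
      rw [Finset.HasAntidiagonal.mem_antidiagonal] at hx hy
      -- middle term always vanishes
      have ht2 : der A c Idx.one Idx.mu Idx.mu x.2 y.2 = 0 := by
        simp [der, show eta A Idx.mu Idx.mu = 0 from rfl]
      -- the double sum always vanishes
      have ht3 : ∀ i : Fin 3, ∀ j ∈ Finset.Icc 1 (A i - 1),
          (A i : ℂ) * der A c (Idx.pt w 1) (Idx.pt w (A w - 1)) (Idx.pt i j) x.1 y.1 *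
            der A c (Idx.pt i (A i - j)) Idx.mu Idx.mu x.2 y.2 = 0 := by
        intro i j hj
        rw [Finset.mem_Icc] at hj
        have hAi := hA2all i
        have hvptij : ValidPt A (i, j) := validPt_mk i j hj.1 hj.2
        rcases (by omega : y.2 = 0 ∨ (y.1 = 0 ∧ y.2 = 1)) with hy2 | ⟨hy1, hy2⟩
        · have hz : der A c (Idx.pt i (A i - j)) Idx.mu Idx.mu x.2 y.2 = 0 := by
            simp [der, muCount, hy2]
          rw [hz, mul_zero]
        · by_cases hlen1 : 2 ≤ len x.1
          · -- the second factor vanishes by homogeneity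
            have hx2le : x.2 ≤ γ := hx ▸ le_add_self
            have hlen2 : len x.2 ≤ 1 := by
              have h := len_add x.1 x.2
              rw [hx, hlen] at h
              omega
            have hvpt : ValidPt A (i, A i - j) := validPt_mk i (A i - j) (by omega) (by omega)
            have hcz : c (x.2 + Finsupp.single (i, A i - j) 1) 1 = 0 := by
              apply c_len_le_two hA01 hA12 ha₁ hadm
              · exact valid_add (valid_of_le hx2le hval) (valid_single hvpt 1)
              · rw [len_add, len_single]; omega
            have hz : der A c (Idx.pt i (A i - j)) Idx.mu Idx.mu x.2 y.2 = 0 := by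
              simp [der, muCount, ptsOf, hy2, hcz]
            rw [hz, mul_zero]
          · -- the first factor vanishes by separation / cubic values
            have hx1le : x.1 ≤ γ := hx ▸ le_self_add
            have hcz : c (x.1 + (Finsupp.single ((w,1) : Pt) 1 +
                (Finsupp.single ((w, A w - 1) : Pt) 1 + Finsupp.single ((i,j) : Pt) 1))) 0 = 0 := by
              rcases (by omega : len x.1 = 0 ∨ len x.1 = 1) with h0 | h1
              · rw [len_eq_zero h0, zero_add]
                by_cases hiw : i = w
                · subst hiw
                  have hc := c_cubic_offsum hcub hvp1 hvp2 hvptij (by omega)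
                  simpa [e, add_assoc] using hc
                · refine hsep _ ?_ w i 1 j (fun h => hiw h.symm) hvp1 hvptij ?_
                  · exact valid_add (valid_single hvp1 1)
                      (valid_add (valid_single hvp2 1) (valid_single hvptij 1))
                  · exact add_le_add le_rfl le_add_self
              · have hx1ne : x.1 ≠ 0 := by
                  intro h; rw [h] at h1; simp [len] at h1
                obtain ⟨p0, hp0⟩ := Finsupp.ne_iff.mp hx1ne
                rw [Finsupp.coe_zero, Pi.zero_apply] at hp0
                have hγp0 : γ p0 ≠ 0 := by
                  have := hx1le p0; omega
                have hp02 : p0.2 = 1 := hsupp p0 (Finsupp.mem_support_iff.mpr hγp0)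
                have hp0eq : p0 = (p0.1, 1) := by
                  rw [← hp02]
                have hvw : p0.1 ≠ w := by
                  intro h
                  apply hγp0
                  rw [hp0eq, h, hw]
                have hx1v : 1 ≤ x.1 (p0.1, 1) := by
                  rw [← hp0eq]; omega
                refine hsep _ ?_ p0.1 w 1 1 hvw (validPt_mk p0.1 1 le_rfl (by have := hA2all p0.1; omega)) hvp1 ?_
                · exact valid_add (valid_of_le hx1le hval)
                    (valid_add (valid_single hvp1 1)
                      (valid_add (valid_single hvp2 1) (valid_single hvptij 1)))
                · exact add_le_add (Finsupp.single_le_iff.mpr hx1v) le_self_add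
            have hz : der A c (Idx.pt w 1) (Idx.pt w (A w - 1)) (Idx.pt i j) x.1 y.1 = 0 := by
              simp [der, muCount, ptsOf, hy1, hcz]
            rw [hz, mul_zero, zero_mul]
      have hsum3 : (∑ i : Fin 3, ∑ j ∈ Finset.Icc 1 (A i - 1),
          (A i : ℂ) * der A c (Idx.pt w 1) (Idx.pt w (A w - 1)) (Idx.pt i j) x.1 y.1 *
            der A c (Idx.pt i (A i - j)) Idx.mu Idx.mu x.2 y.2) = 0 :=
        Finset.sum_eq_zero fun i _ => Finset.sum_eq_zero (ht3 i)
      rw [ht2, mul_zero, hsum3, add_zero, add_zero]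
      by_cases hmain : x.1 = 0 ∧ y.1 = 0
      · obtain ⟨hx1, hy1⟩ := hmain
        have hx2 : x.2 = γ := by rw [hx1, zero_add] at hx; exact hx
        have hy2 : y.2 = 1 := by omega
        rw [if_pos ⟨hx1, hy1⟩]
        have heta : eta A (Idx.pt w 1) (Idx.pt w (A w - 1)) = (A w : ℂ)⁻¹ := by
          rw [show eta A (Idx.pt w 1) (Idx.pt w (A w - 1)) =
              if w = w ∧ 1 + (A w - 1) = A w ∧ 1 ≤ 1 ∧ 1 ≤ A w - 1 then (A w : ℂ)⁻¹ else 0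
              from rfl,
            if_pos ⟨rfl, by omega, le_rfl, by omega⟩]
        simp [der, muCount, ptsOf, dfac, hx1, hy1, hx2, hy2, heta]
      · rw [if_neg hmain]
        have hz : der A c (Idx.pt w 1) (Idx.pt w (A w - 1)) Idx.one x.1 y.1 = 0 := by
          simp only [der, reduceCtorEq, if_false]
          exact if_neg hmain
        rw [hz, zero_mul]
    rw [Finset.sum_congr rfl fun x hx => Finset.sum_congr rfl fun y hy => step x hx y hy]
    have hy_inner : ∀ x : Expv × Expv,
        (∑ y ∈ Finset.HasAntidiagonal.antidiagonal (1:ℕ), if x.1 = 0 ∧ y.1 = 0 then (A w:ℂ)⁻¹ * c γ 1 else 0)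
          = if x.1 = 0 then (A w:ℂ)⁻¹ * c γ 1 else 0 := by
      intro x
      rw [show Finset.HasAntidiagonal.antidiagonal (1:ℕ) = {(0,1),(1,0)} by decide]
      by_cases h : x.1 = 0 <;> simp [h]
    rw [Finset.sum_congr rfl fun x _ => hy_inner x]
    have hx_outer : ∀ x ∈ Finset.HasAntidiagonal.antidiagonal γ,
        (if x.1 = 0 then (A w:ℂ)⁻¹ * c γ 1 else 0)
          = if x = ((0 : Expv), γ) then (A w:ℂ)⁻¹ * c γ 1 else 0 := by
      intro x hx
      rw [Finset.HasAntidiagonal.mem_antidiagonal] at hx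
      by_cases h : x.1 = 0
      · rw [if_pos h, if_pos (Prod.ext h (by rw [← hx, h, zero_add]))]
      · rw [if_neg h, if_neg (fun he => h (by rw [he]))]
    rw [Finset.sum_congr rfl hx_outer,
      Finset.sum_ite_eq' (Finset.HasAntidiagonal.antidiagonal γ) ((0 : Expv), γ) (fun _ => (A w:ℂ)⁻¹ * c γ 1),
      if_pos (Finset.HasAntidiagonal.mem_antidiagonal.mpr (zero_add γ))]
  rw [hL, hR] at hwdvv
  have hne : (A w : ℂ)⁻¹ ≠ 0 := inv_ne_zero (Nat.cast_ne_zero.mpr (by omega))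
  exact (mul_eq_zero.mp hwdvv).resolve_left hne
/-- Lemma (Case 2 of Proposition 3.8, for a₁ ≥ 2). -/
theorem degree_one_coefficient_vanishing_corner (A : Fin 3 → ℕ) (hA : ∀ i, 1 ≤ A i) (hA01 : A 0 ≤ A 1) (hA12 : A 1 ≤ A 2)
    (c : Expv → ℕ → ℂ) (hadm : IsAdmissible A c) (hcub : CubicValues A c)
    (hsep : Separation A c) (hsym : Symmetry A c)
    (ha₁ : 2 ≤ A 0)
    (g₁ g₂ g₃ : ℕ) (hsum : g₁ + g₂ + g₃ = 3) (hprod : g₁ * g₂ * g₃ = 0) :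
    c (g₁ • e 0 1 + g₂ • e 1 1 + g₃ • e 2 1) 1 = 0 := by
  have hA2all : ∀ i : Fin 3, 2 ≤ A i := two_le_A hA01 hA12 ha₁
  set γ : Expv := g₁ • e 0 1 + g₂ • e 1 1 + g₃ • e 2 1 with hγdef
  have hγ : γ = Finsupp.single ((0:Fin 3), 1) g₁ + Finsupp.single ((1:Fin 3), 1) g₂ +
      Finsupp.single ((2:Fin 3), 1) g₃ := by
    rw [hγdef]
    simp [e, Finsupp.smul_single]
  have hval : Valid A γ := by
    rw [hγ]
    exact valid_add (valid_add
      (valid_single (validPt_mk 0 1 le_rfl (by have := hA2all 0; omega)) _)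
      (valid_single (validPt_mk 1 1 le_rfl (by have := hA2all 1; omega)) _))
      (valid_single (validPt_mk 2 1 le_rfl (by have := hA2all 2; omega)) _)
  have hlen : len γ = 3 := by
    rw [hγ, len_add, len_add, len_single, len_single, len_single]
    omega
  have happ : ∀ v : Fin 3, γ (v, 1) = (if (0:Fin 3) = v then g₁ else 0) +
      (if (1:Fin 3) = v then g₂ else 0) + (if (2:Fin 3) = v then g₃ else 0) := by
    intro v
    rw [hγ]
    simp [Finsupp.single_apply, Prod.ext_iff]
  have hsupp : ∀ p ∈ γ.support, p.2 = 1 := by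
    rintro ⟨v, j⟩ hp
    rw [Finsupp.mem_support_iff, hγ] at hp
    simp only [Finsupp.add_apply, Finsupp.single_apply] at hp
    by_contra hj
    apply hp
    rw [if_neg (fun h => hj ((Prod.mk.injEq _ _ _ _).mp h).2.symm),
      if_neg (fun h => hj ((Prod.mk.injEq _ _ _ _).mp h).2.symm),
      if_neg (fun h => hj ((Prod.mk.injEq _ _ _ _).mp h).2.symm)]
    rfl
  have hcase : γ ((0:Fin 3), 1) = 0 ∨ γ ((1:Fin 3), 1) = 0 ∨ γ ((2:Fin 3), 1) = 0 := by
    rw [happ 0, happ 1, happ 2]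
    have e01 : ¬((0:Fin 3) = 1) := by decide
    have e02 : ¬((0:Fin 3) = 2) := by decide
    have e10 : ¬((1:Fin 3) = 0) := by decide
    have e12 : ¬((1:Fin 3) = 2) := by decide
    have e20 : ¬((2:Fin 3) = 0) := by decide
    have e21 : ¬((2:Fin 3) = 1) := by decide
    simp only [if_pos rfl, if_neg e01, if_neg e02, if_neg e10, if_neg e12, if_neg e20,
      if_neg e21, add_zero, zero_add]
    rcases Nat.mul_eq_zero.mp hprod with h | h
    · rcases Nat.mul_eq_zero.mp h with h' | h'
      · exact Or.inl h'
      · exact Or.inr (Or.inl h')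
    · exact Or.inr (Or.inr h)
  rcases hcase with h | h | h
  · exact key_vanish A hA01 hA12 c hadm hcub hsep ha₁ γ hval hlen hsupp 0 h
  · exact key_vanish A hA01 hA12 c hadm hcub hsep ha₁ γ hval hlen hsupp 1 h
  · exact key_vanish A hA01 hA12 c hadm hcub hsep ha₁ γ hval hlen hsupp 2 h

end FrobeniusUniqueness
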